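/- The supremum over all 4-point configurations S in the plane of σ(S)/D(S) equals 4 + 2√(2−√3), where σ(S) is the sum of all pairwise distances and D(S) is the diameter of S. Moreover this value is attained: there exist four planar points achieving σ(S)/D(S) = 4 + 2√(2−√3). -/

import Mathlib

set_option maxHeartbeats 1000000

namespace Stmt7Aux

noncomputable def K : ℝ := Real.sqrt (2 - Real.sqrt 3)

lemma s3_nonneg : (0:ℝ) ≤ Real.sqrt 3 := Real.sqrt_nonneg 3
lemma s3_sq : (Real.sqrt 3)^2 = 3 := Real.sq_sqrt (by norm_num)
lemma s3_lt : Real.sqrt 3 < 7/4 := by nlinarith [s3_sq, s3_nonneg]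
lemma s3_gt : (3/2:ℝ) < Real.sqrt 3 := by nlinarith [s3_sq, s3_nonneg]
lemma K_nonneg : (0:ℝ) ≤ K := Real.sqrt_nonneg _
lemma K_sq : K^2 = 2 - Real.sqrt 3 := Real.sq_sqrt (by nlinarith [s3_lt, s3_nonneg])
lemma K_le_one : K ≤ 1 := by nlinarith [K_sq, K_nonneg, s3_gt]
lemma one_le_2K : 1 ≤ 2*K := by nlinarith [K_sq, K_nonneg, s3_lt]

lemma le_of_sq_le' (a b : ℝ) (ha : 0 ≤ a) (hb : 0 ≤ b) (h : a^2 ≤ b^2) : a ≤ b := by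
  nlinarith [sq_nonneg (a-b), sq_nonneg (a+b)]

lemma eq_of_sq_eq (a b : ℝ) (ha : 0 ≤ a) (hb : 0 ≤ b) (h : a^2 = b^2) : a = b :=
  le_antisymm (le_of_sq_le' a b ha hb h.le) (le_of_sq_le' b a hb ha h.ge)

lemma chord_le (χ z : ℝ) (hz : 0 ≤ z) (hid : χ^2*(4-χ^2) = z^2)
    (hz1 : z ≤ 1) (hb : χ^2 ≤ 5/2) : χ ≤ K := by
  have h1 : χ^2 ≤ 2 - Real.sqrt 3 := by nlinarith [s3_sq, s3_gt]
  nlinarith [K_sq, K_nonneg]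

/-- helper for case 2 of lemI : 2z = xQ - yP -/
lemma lemI_case2 (x y z P Q : ℝ) (hx0 : 0 ≤ x) (hy0 : 0 ≤ y) (hz0 : 0 ≤ z)
    (hx1 : x ≤ 1) (hy1 : y ≤ 1)
    (hP0 : 0 ≤ P) (hQ0 : 0 ≤ Q) (hP2 : P^2 = 4 - x^2) (hQ2 : Q^2 = 4 - y^2)
    (hcase : 2*z = x*Q - y*P) : x + y + z ≤ 1 + 2*K := by
  have hP2' : P ≤ 2 := by nlinarith
  have hPg : (3:ℝ)/2 ≤ P := by nlinarith
  have hQ2' : Q ≤ 2 := by nlinarith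
  have hkey : x*y*Q ≤ 4 - 2*P + P*y^2 := by
    have hrhs : 0 ≤ 4 - 2*P + P*y^2 := by nlinarith
    have hsq : (4 - 2*P + P*y^2)^2 - (x*y*Q)^2 = 4*(P - 2 + y^2)^2 := by
      linear_combination (-(y^2*(4-y^2)))*hP2 + (-(x^2*y^2))*hQ2
    nlinarith [sq_nonneg (P-2+y^2), mul_nonneg (mul_nonneg hx0 hy0) hQ0]
  obtain ⟨χ, hχ0, hχ2⟩ : ∃ χ:ℝ, 0 ≤ χ ∧ χ^2 = 2 - P :=
    ⟨Real.sqrt (2-P), Real.sqrt_nonneg _, Real.sq_sqrt (by linarith)⟩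
  have hyz : y + z ≤ 2*χ := by
    have hb : 0 ≤ 8 - 4*P + 2*P*y^2 - 2*x*y*Q := by nlinarith
    have hident : 16*(2-P) - (x*Q + y*(2-P))^2 = (2-P)*(8-4*P+2*P*y^2-2*x*y*Q) := by
      linear_combination (y^2-4)*hP2 + (-(x^2))*hQ2
    have h1 : (y+z)^2 ≤ (2*χ)^2 := by nlinarith [mul_nonneg (by linarith : (0:ℝ) ≤ 2-P) hb]
    exact le_of_sq_le' _ _ (by linarith) (by linarith) h1
  have hχK : χ ≤ K := chord_le χ x hx0 (by linear_combination (4-χ^2+P-2)*hχ2 - hP2) hx1 (by nlinarith)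
  linarith

lemma lemI (x y z : ℝ) (hx0 : 0 ≤ x) (hy0 : 0 ≤ y) (hz0 : 0 ≤ z)
    (hx1 : x ≤ 1) (hy1 : y ≤ 1) (hz1 : z ≤ 1)
    (hrel : x^4+y^4+z^4 - 2*x^2*y^2 - 2*y^2*z^2 - 2*z^2*x^2 + x^2*y^2*z^2 = 0) :
    x + y + z ≤ 1 + 2*K := by
  obtain ⟨P, hP0, hP2⟩ : ∃ P:ℝ, 0 ≤ P ∧ P^2 = 4 - x^2 :=
    ⟨Real.sqrt (4-x^2), Real.sqrt_nonneg _, Real.sq_sqrt (by nlinarith)⟩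
  obtain ⟨Q, hQ0, hQ2⟩ : ∃ Q:ℝ, 0 ≤ Q ∧ Q^2 = 4 - y^2 :=
    ⟨Real.sqrt (4-y^2), Real.sqrt_nonneg _, Real.sq_sqrt (by nlinarith)⟩
  have hP2' : P ≤ 2 := by nlinarith
  have hQ2' : Q ≤ 2 := by nlinarith
  have e1 : x^2*Q^2 = 4*x^2 - x^2*y^2 := by rw [hQ2]; ring
  have e2 : y^2*P^2 = 4*y^2 - x^2*y^2 := by rw [hP2]; ring
  have hfac : (4*z^2 - (x*Q+y*P)^2) * (4*z^2 - (x*Q-y*P)^2) = 0 := by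
    linear_combination 16*hrel +
      (-8*z^2 + (x^2*Q^2 - y^2*P^2 + (4*x^2-x^2*y^2) - (4*y^2-x^2*y^2)))*e1 +
      (-8*z^2 - (x^2*Q^2 - y^2*P^2 + (4*x^2-x^2*y^2) - (4*y^2-x^2*y^2)))*e2
  rcases mul_eq_zero.mp hfac with h | h
  · -- z = (xQ + yP)/2, opposite-side case
    have hzv : 2*z = x*Q + y*P := by
      have h1 : (2*z - (x*Q+y*P))*(2*z + (x*Q+y*P)) = 0 := by linear_combination h
      rcases mul_eq_zero.mp h1 with h2 | h2
      · linarith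
      · have h3 : x*Q + y*P ≤ 0 := by linarith
        have h4 : x*Q + y*P = 0 := le_antisymm h3 (by positivity)
        linarith
    have hPQ4 : P*Q ≤ 4 := by nlinarith [mul_nonneg hP0 hQ0]
    obtain ⟨χ, hχ0, hχ2⟩ : ∃ χ:ℝ, 0 ≤ χ ∧ χ^2 = 2 - (P*Q - x*y)/2 :=
      ⟨Real.sqrt _, Real.sqrt_nonneg _, Real.sq_sqrt (by nlinarith [mul_nonneg hx0 hy0])⟩
    have hPQ : 2*(P*Q) ≤ 8 - x^2 - y^2 := by
      have h1 : (2*(P*Q))^2 ≤ (8-x^2-y^2)^2 := by nlinarith [sq_nonneg (x^2-y^2)]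
      exact le_of_sq_le' _ _ (by positivity) (by nlinarith) h1
    have hxy2χ : x + y ≤ 2*χ := by
      refine le_of_sq_le' _ _ (by positivity) (by linarith) ?_
      nlinarith [hχ2]
    have hident : χ^2*(4-χ^2) = z^2 := by
      linear_combination (4-χ^2-(2-(P*Q-x*y)/2))*hχ2 - ((2*z+x*Q+y*P)/4)*hzv
        - hP2 - ((P^2+x^2)/4) * hQ2
    have hχK : χ ≤ K := chord_le χ z hz0 hident hz1
      (by nlinarith [mul_nonneg hP0 hQ0, mul_nonneg hx0 hy0, mul_le_one₀ hx1 hy0 hy1])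
    linarith
  · have h1 : (2*z - (x*Q-y*P))*(2*z + (x*Q-y*P)) = 0 := by linear_combination h
    rcases mul_eq_zero.mp h1 with h2 | h2
    · exact lemI_case2 x y z P Q hx0 hy0 hz0 hx1 hy1 hP0 hQ0 hP2 hQ2 (by linarith)
    · have := lemI_case2 y x z Q P hy0 hx0 hz0 hy1 hx1 hQ0 hP0 hQ2 hP2 (by linarith)
      linarith

/-- monotonicity of t ↦ α√(1-t) + √(β2+2Et) under tangent certificates -/
lemma monoLem (α β2 E T T' : ℝ) (hα : 0 ≤ α) (hβ2 : 0 ≤ β2) (hE : 0 < E)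
    (hT0 : 0 ≤ T) (hTT : T ≤ T') (hT1 : T' ≤ 1)
    (hc1 : α^2*(β2+2*E*T) ≤ 4*E^2*(1-T))
    (hc2 : α^2*(β2+2*E*T') ≤ 4*E^2*(1-T')) :
    α*Real.sqrt (1-T) + Real.sqrt (β2+2*E*T) ≤ α*Real.sqrt (1-T') + Real.sqrt (β2+2*E*T') := by
  rcases eq_or_lt_of_le hTT with h | h
  · rw [h]
  set A := Real.sqrt (1-T) with hA
  set A' := Real.sqrt (1-T') with hA'
  set B := Real.sqrt (β2+2*E*T) with hB
  set B' := Real.sqrt (β2+2*E*T') with hB'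
  have hA0 : 0 ≤ A := Real.sqrt_nonneg _
  have hA'0 : 0 ≤ A' := Real.sqrt_nonneg _
  have hB0 : 0 ≤ B := Real.sqrt_nonneg _
  have hB'0 : 0 ≤ B' := Real.sqrt_nonneg _
  have hA2 : A^2 = 1-T := Real.sq_sqrt (by linarith)
  have hA'2 : A'^2 = 1-T' := Real.sq_sqrt (by linarith)
  have hB2 : B^2 = β2+2*E*T := Real.sq_sqrt (by nlinarith)
  have hB'2 : B'^2 = β2+2*E*T' := Real.sq_sqrt (by nlinarith)
  have hApos : 0 < A := Real.sqrt_pos.mpr (by linarith)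
  have hB'pos : 0 < B' := Real.sqrt_pos.mpr (by nlinarith)
  have k1 : α*B ≤ 2*E*A := by
    apply le_of_sq_le' _ _ (by positivity) (by positivity)
    calc (α*B)^2 = α^2*(β2+2*E*T) := by rw [mul_pow, hB2]
    _ ≤ 4*E^2*(1-T) := hc1
    _ = (2*E*A)^2 := by rw [mul_pow, mul_pow, hA2]; ring
  have k2 : α*B' ≤ 2*E*A' := by
    apply le_of_sq_le' _ _ (by positivity) (by positivity)
    calc (α*B')^2 = α^2*(β2+2*E*T') := by rw [mul_pow, hB'2]
    _ ≤ 4*E^2*(1-T') := hc2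
    _ = (2*E*A')^2 := by rw [mul_pow, mul_pow, hA'2]; ring
  have hX : 0 < (A+A')*(B+B') := by positivity
  have key : (α*(A-A'))*((A+A')*(B+B')) ≤ (B'-B)*((A+A')*(B+B')) := by
    have e1 : (α*(A-A'))*((A+A')*(B+B')) = α*(A^2-A'^2)*(B+B') := by ring
    have e2 : (B'-B)*((A+A')*(B+B')) = (B'^2-B^2)*(A+A') := by ring
    rw [e1, e2, hA2, hA'2, hB2, hB'2]
    have e3 : (1-T-(1-T')) = T'-T := by ring
    have e4 : β2+2*E*T'-(β2+2*E*T) = 2*E*(T'-T) := by ring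
    rw [e3]
    calc α*(T'-T)*(B+B') = (T'-T)*(α*B + α*B') := by ring
    _ ≤ (T'-T)*(2*E*A + 2*E*A') := by
        apply mul_le_mul_of_nonneg_left (by linarith) (by linarith)
    _ = (β2 + 2*E*T' - (β2+2*E*T))*(A+A') := by rw [e4]; ring
  have := le_of_mul_le_mul_right key hX
  linarith

/-- the tangent certificate polynomial inequality -/
lemma certLem (σ T : ℝ) (hσ1 : 1/2 ≤ σ) (hσ2 : σ ≤ 1) (hT0 : 0 ≤ T)
    (hT : T ≤ (2 - Real.sqrt 3)/4) :
    (8*(1-σ))*((1-2*σ)^2+2*(4*σ)*T) ≤ 4*(4*σ)^2*(1-T) := by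
  have h1 : T ≤ 1/8 := by nlinarith [s3_gt]
  have h2 : 64*σ*T ≤ 8*σ := by nlinarith
  nlinarith [h2, mul_nonneg (by linarith : (0:ℝ) ≤ σ - 1/2) (sq_nonneg σ),
    mul_nonneg (by linarith : (0:ℝ) ≤ σ) (sq_nonneg (σ-1/2)), sq_nonneg (σ-1/2)]

lemma lemH (a g w : ℝ) (ha1 : 1/2 ≤ a) (ha2 : a ≤ 1) (hg1 : -1 ≤ g) (hg2 : g ≤ -1/2)
    (hrel : a^2 + g^2 + w^2 - 2*a*g*w = 1)
    (hs0 : 0 ≤ 3 - 2*a + 2*g - 2*w) (hs1 : 3 - 2*a + 2*g - 2*w ≤ 1) :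
    Real.sqrt (2-2*a) + Real.sqrt (2+2*g) + Real.sqrt (3-2*a+2*g-2*w) ≤ 1 + 2*K := by
  set u1 := Real.sqrt (2-2*a) with hu1def
  set u2 := Real.sqrt (2+2*a) with hu2def
  set v1 := Real.sqrt (2-2*g) with hv1def
  set v2 := Real.sqrt (2+2*g) with hv2def
  set s := Real.sqrt (3-2*a+2*g-2*w) with hsdef
  have hu10 : 0 ≤ u1 := Real.sqrt_nonneg _
  have hu20 : 0 ≤ u2 := Real.sqrt_nonneg _
  have hv10 : 0 ≤ v1 := Real.sqrt_nonneg _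
  have hv20 : 0 ≤ v2 := Real.sqrt_nonneg _
  have hs0' : 0 ≤ s := Real.sqrt_nonneg _
  have hu1 : u1^2 = 2-2*a := Real.sq_sqrt (by linarith)
  have hu2 : u2^2 = 2+2*a := Real.sq_sqrt (by linarith)
  have hv1 : v1^2 = 2-2*g := Real.sq_sqrt (by linarith)
  have hv2 : v2^2 = 2+2*g := Real.sq_sqrt (by linarith)
  have hsq : s^2 = 3-2*a+2*g-2*w := Real.sq_sqrt hs0
  have hs1' : s ≤ 1 := le_of_sq_le' _ _ hs0' (by norm_num) (by rw [hsq]; nlinarith only [hs1])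
  have hu1b : u1 ≤ 1 := le_of_sq_le' _ _ hu10 (by norm_num) (by rw [hu1]; nlinarith only [ha1])
  have hv2b : v2 ≤ 1 := le_of_sq_le' _ _ hv20 (by norm_num) (by rw [hv2]; nlinarith only [hg2])
  have hu2b : u2 ≤ 2 := le_of_sq_le' _ _ hu20 (by norm_num) (by rw [hu2]; nlinarith only [ha2])
  have hv1b : v1 ≤ 2 := le_of_sq_le' _ _ hv10 (by norm_num) (by rw [hv1]; nlinarith only [hg1])
  obtain ⟨h, hh0, hh⟩ : ∃ h:ℝ, 0 ≤ h ∧ h^2 = (1-a^2)*(1-g^2) :=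
    ⟨Real.sqrt _, Real.sqrt_nonneg _, Real.sq_sqrt
      (mul_nonneg (by nlinarith only [ha2, ha1]) (by nlinarith only [hg1, hg2]))⟩
  have hprod : u1*u2*v1*v2 = 4*h := by
    apply eq_of_sq_eq _ _ (by positivity) (by positivity)
    have e : (u1*u2*v1*v2)^2 = u1^2*u2^2*v1^2*v2^2 := by ring
    rw [e, hu1, hu2, hv1, hv2]
    rw [show (4*h)^2 = 16*h^2 from by ring, hh]; ring
  have hbr : (w - (a*g+h))*(w - (a*g-h)) = 0 := by linear_combination hrel - hh
  rcases mul_eq_zero.mp hbr with hw | hw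
  · -- main branch : w = a*g + h
    have hw' : w = a*g + h := by linarith [sub_eq_zero.mp hw]
    have hs2 : s^2 = 3-2*a+2*g-2*a*g-2*h := by rw [hsq, hw']; ring
    set σ := (v1*u2 - v2*u1)/4 with hσdef
    set c := (u2*v2 + u1*v1)/4 with hcdef
    set sS := (u1*v2 + u2*v1)/4 with hsSdef
    have hσc : σ^2 + c^2 = 1 := by
      rw [hσdef, hcdef]
      linear_combination ((u2^2+u1^2)/16)*hv1 + ((u1^2+u2^2)/16)*hv2 + (1/4)*hu2 + (1/4)*hu1
    have hc0 : 0 ≤ c := by rw [hcdef]; positivity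
    have hc1 : c ≤ 1 := by nlinarith only [hσc, sq_nonneg σ, hc0]
    have hσhalf : 1/2 ≤ σ := by
      have e1 : v2*u1 ≤ 1 := mul_le_one₀ hv2b hu10 hu1b
      have e2a : (v2*u1)^2 = (2+2*g)*(2-2*a) := by rw [mul_pow, hv2, hu1]
      have e2b : (v1*u2)^2 = (2-2*g)*(2+2*a) := by rw [mul_pow, hv1, hu2]
      have e2 : 2 + v2*u1 ≤ v1*u2 := by
        apply le_of_sq_le' _ _ (by positivity) (by positivity)
        nlinarith only [e1, e2a, e2b, ha1, hg2, mul_nonneg hv20 hu10]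
      rw [hσdef]; linarith
    have hσ1 : σ ≤ 1 := by nlinarith only [hσc, sq_nonneg c, hσhalf]
    have hsS0 : 0 ≤ sS := by rw [hsSdef]; positivity
    have hsS1 : sS ≤ 1 := by
      apply le_of_sq_le' _ _ hsS0 (by norm_num)
      rw [hsSdef]
      nlinarith only [sq_nonneg (u1*v1 - u2*v2), hu1, hu2, hv1, hv2]
    have hsSs3 : Real.sqrt 3 ≤ 2*sS := by
      have e16 : 16*sS^2 = 8 - 8*(a*g) + 8*h := by
        rw [hsSdef]
        linear_combination (v2^2/1)*hu1 + 2*hprod + (2-2*a)*hv2 + (v1^2)*hu2 + (2+2*a)*hv1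
      have hkey : 1 + 2*(a*g) ≤ 2*h := by
        by_cases hag : 1 + 2*(a*g) ≤ 0
        · linarith
        · push_neg at hag
          apply le_of_sq_le' _ _ (by linarith) (by linarith)
          have e3 : 4*(a+g)^2 ≤ 1 := by
            nlinarith only [mul_nonneg (by linarith : (0:ℝ) ≤ 1/2-(a+g))
              (by linarith : (0:ℝ) ≤ 1/2+(a+g))]
          nlinarith only [hh, e3, hag]
      apply le_of_sq_le' _ _ s3_nonneg (by linarith)
      rw [s3_sq]; nlinarith only [e16, hkey]
    set T2 := (1-sS)/2 with hT2def
    have hT20 : 0 ≤ T2 := by rw [hT2def]; linarith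
    have hT2le : T2 ≤ (2-Real.sqrt 3)/4 := by rw [hT2def]; linarith
    have hid0 : σ - sS + u1*v2/2 = 0 := by rw [hσdef, hsSdef]; ring
    have hs2' : s^2 = 1 - 2*(u1*v2)*σ := by
      rw [hσdef]
      linear_combination hs2 + (1/2)*hprod + (-(v2^2)/2)*hu1 + (-(2-2*a)/2)*hv2
    have hs3 : s^2 = (1-2*σ)^2 + 2*(4*σ)*T2 := by
      rw [hT2def]; linear_combination hs2' - (4*σ)*hid0
    have hα2 : (u1+v2)^2 = (8*(1-σ))*(1-T2) := by
      rw [hT2def, hσdef, hsSdef]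
      linear_combination (1 - v2^2/4)*hu1 + (1-(2-2*a)/4)*hv2 + (v1^2/4)*hu2 + ((2+2*a)/4)*hv1
    obtain ⟨α, hα0, hαs⟩ : ∃ α:ℝ, 0 ≤ α ∧ α^2 = 8*(1-σ) :=
      ⟨Real.sqrt _, Real.sqrt_nonneg _, Real.sq_sqrt (by linarith)⟩
    have hAid : α*Real.sqrt (1-T2) = u1+v2 := by
      apply eq_of_sq_eq _ _ (by positivity) (by positivity)
      rw [mul_pow, hαs, Real.sq_sqrt (by linarith : (0:ℝ) ≤ 1-T2), hα2]
    have hsid : Real.sqrt ((1-2*σ)^2 + 2*(4*σ)*T2) = s := by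
      apply eq_of_sq_eq _ _ (Real.sqrt_nonneg _) hs0'
      rw [Real.sq_sqrt (by positivity), hs3]
    have hEpos : (0:ℝ) < 4*σ := by linarith
    by_cases hc : 1/2 ≤ c
    · -- edge 1 : T' = (1-(√3 c + σ)/2)/2
      set T' := (1 - (Real.sqrt 3*c + σ)/2)/2 with hT'def
      have h3c2 : Real.sqrt 3*c + σ ≤ 2 := by
        apply le_of_sq_le' _ _ (by positivity) (by norm_num)
        nlinarith only [hσc, s3_sq, sq_nonneg (c - Real.sqrt 3*σ)]
      have hT'0 : 0 ≤ T' := by rw [hT'def]; linarith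
      have hT'1 : T' ≤ 1 := by
        rw [hT'def]; linarith [mul_nonneg s3_nonneg hc0, hσhalf]
      have hT'le : T' ≤ (2-Real.sqrt 3)/4 := by
        have e1 : Real.sqrt 3*(1-c) ≤ σ := by
          apply le_of_sq_le' _ _ (by nlinarith only [s3_nonneg, hc1]) (by linarith)
          nlinarith only [s3_sq, hσc, hc, hc1]
        rw [hT'def]; nlinarith only [e1, s3_nonneg]
      have hT2T' : T2 ≤ T' := by
        have hidT : sS - (Real.sqrt 3*c+σ)/2 = (Real.sqrt 3*v2-v1)*(Real.sqrt 3*u1-u2)/8 := by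
          rw [hσdef, hcdef, hsSdef]; linear_combination (-(v2*u1)/8)*s3_sq
        have hs1v : Real.sqrt 3*v2 ≤ v1 := by
          apply le_of_sq_le' _ _ (by positivity) hv10
          nlinarith only [s3_sq, hv1, hv2, hg2]
        have hs1u : Real.sqrt 3*u1 ≤ u2 := by
          apply le_of_sq_le' _ _ (by positivity) hu20
          nlinarith only [s3_sq, hu1, hu2, ha1]
        have hnn : 0 ≤ sS - (Real.sqrt 3*c+σ)/2 := by
          rw [hidT]
          have h9 : 0 ≤ (v1 - Real.sqrt 3*v2)*(u2 - Real.sqrt 3*u1) :=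
            mul_nonneg (by linarith) (by linarith)
          nlinarith only [h9]
        rw [hT2def, hT'def]; linarith
      have hcert1 : α^2*((1-2*σ)^2+2*(4*σ)*T2) ≤ 4*(4*σ)^2*(1-T2) := by
        rw [hαs]; exact certLem σ T2 hσhalf hσ1 hT20 hT2le
      have hcert2 : α^2*((1-2*σ)^2+2*(4*σ)*T') ≤ 4*(4*σ)^2*(1-T') := by
        rw [hαs]; exact certLem σ T' hσhalf hσ1 hT'0 hT'le
      have hmono := monoLem α ((1-2*σ)^2) (4*σ) T2 T' hα0 (sq_nonneg _) hEpos hT20 hT2T' hT'1 hcert1 hcert2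
      have e1 : α*Real.sqrt (1-T') = 1 + Real.sqrt 3*c - σ := by
        apply eq_of_sq_eq _ _ (by positivity)
          (by nlinarith only [mul_nonneg s3_nonneg hc0, hσ1])
        rw [mul_pow, hαs, Real.sq_sqrt (by linarith : (0:ℝ) ≤ 1-T'), hT'def]
        linear_combination (-(c^2))*s3_sq + (-3)*hσc
      have e2 : Real.sqrt ((1-2*σ)^2 + 2*(4*σ)*T') = Real.sqrt 3*σ - c := by
        have hcs : c ≤ Real.sqrt 3*σ := by
          apply le_of_sq_le' _ _ hc0 (by positivity)
          nlinarith only [s3_sq, hσc, hσhalf]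
        apply eq_of_sq_eq _ _ (Real.sqrt_nonneg _) (by linarith)
        rw [Real.sq_sqrt (by positivity), hT'def]
        linear_combination (-(σ^2))*s3_sq - hσc
      have e3 : (Real.sqrt 3 - 1)*(c+σ) ≤ 2*K := by
        apply le_of_sq_le' _ _ (by nlinarith only [s3_gt, hc0, hσhalf])
          (by nlinarith only [K_nonneg])
        nlinarith only [K_sq, s3_sq, s3_lt, sq_nonneg (c-σ), hσc, hc0, hσhalf]
      calc u1 + v2 + s = α*Real.sqrt (1-T2) + Real.sqrt ((1-2*σ)^2+2*(4*σ)*T2) := by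
            rw [hAid, hsid]
        _ ≤ α*Real.sqrt (1-T') + Real.sqrt ((1-2*σ)^2+2*(4*σ)*T') := hmono
        _ = 1 + (Real.sqrt 3-1)*(c+σ) := by rw [e1, e2]; ring
        _ ≤ 1 + 2*K := by linarith [e3]
    · -- edge 2 : c < 1/2, T' = (1-σ)/2
      push_neg at hc
      set T' := (1-σ)/2 with hT'def
      have hT'0 : 0 ≤ T' := by rw [hT'def]; linarith
      have hT'1 : T' ≤ 1 := by rw [hT'def]; linarith
      have hT'le : T' ≤ (2-Real.sqrt 3)/4 := by
        have e1 : Real.sqrt 3 ≤ 2*σ := by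
          apply le_of_sq_le' _ _ s3_nonneg (by linarith)
          rw [s3_sq]; nlinarith only [hσc, hc, hc0]
        rw [hT'def]; linarith
      have hT2T' : T2 ≤ T' := by
        have e : sS - σ = u1*v2/2 := by rw [hσdef, hsSdef]; ring
        have h2 : 0 ≤ sS - σ := by rw [e]; positivity
        rw [hT2def, hT'def]; linarith
      have hcert1 : α^2*((1-2*σ)^2+2*(4*σ)*T2) ≤ 4*(4*σ)^2*(1-T2) := by
        rw [hαs]; exact certLem σ T2 hσhalf hσ1 hT20 hT2le
      have hcert2 : α^2*((1-2*σ)^2+2*(4*σ)*T') ≤ 4*(4*σ)^2*(1-T') := by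
        rw [hαs]; exact certLem σ T' hσhalf hσ1 hT'0 hT'le
      have hmono := monoLem α ((1-2*σ)^2) (4*σ) T2 T' hα0 (sq_nonneg _) hEpos hT20 hT2T' hT'1 hcert1 hcert2
      have e1 : α*Real.sqrt (1-T') = 2*c := by
        apply eq_of_sq_eq _ _ (by positivity) (by linarith)
        rw [mul_pow, hαs, Real.sq_sqrt (by linarith : (0:ℝ) ≤ 1-T'), hT'def]
        linear_combination (-4)*hσc
      have e2 : Real.sqrt ((1-2*σ)^2 + 2*(4*σ)*T') = 1 := by
        rw [hT'def, show (1-2*σ)^2 + 2*(4*σ)*((1-σ)/2) = 1 from by ring, Real.sqrt_one]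
      calc u1 + v2 + s = α*Real.sqrt (1-T2) + Real.sqrt ((1-2*σ)^2+2*(4*σ)*T2) := by
            rw [hAid, hsid]
        _ ≤ α*Real.sqrt (1-T') + Real.sqrt ((1-2*σ)^2+2*(4*σ)*T') := hmono
        _ = 2*c + 1 := by rw [e1, e2]
        _ ≤ 1 + 2*K := by linarith [one_le_2K]
  · -- degenerate branch : w = a*g - h
    have hw' : w = a*g - h := by linarith [sub_eq_zero.mp hw]
    have hdeg : h ≤ (1+g)*(a-1) := by nlinarith only [hs1, hw']
    have hle0 : (1+g)*(a-1) ≤ 0 :=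
      mul_nonpos_of_nonneg_of_nonpos (by linarith) (by linarith)
    have hh00 : h = 0 := le_antisymm (by linarith) hh0
    have hfac0 : (1-a^2)*(1-g^2) = 0 := by rw [← hh, hh00]; ring
    rcases mul_eq_zero.mp hfac0 with hx | hx
    · have hae : a = 1 := by nlinarith only [hx, ha1, ha2]
      have hz : u1 = 0 := by rw [hu1def, hae, show 2-2*(1:ℝ) = 0 from by ring, Real.sqrt_zero]
      rw [hz]; linarith [hv2b, hs1', one_le_2K]
    · have hge : g = -1 := by nlinarith only [hx, hg1, hg2]
      have hz : v2 = 0 := by rw [hv2def, hge, show 2+2*(-1:ℝ) = 0 from by ring, Real.sqrt_zero]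
      rw [hz]; linarith [hu1b, hs1', one_le_2K]

lemma mink (x1 y1 x2 y2 : ℝ) : Real.sqrt ((x1+x2)^2+(y1+y2)^2) ≤
    Real.sqrt (x1^2+y1^2) + Real.sqrt (x2^2+y2^2) := by
  set B1 := Real.sqrt (x1^2+y1^2) with hB1
  set B2 := Real.sqrt (x2^2+y2^2) with hB2
  have hB10 : 0 ≤ B1 := Real.sqrt_nonneg _
  have hB20 : 0 ≤ B2 := Real.sqrt_nonneg _
  have hB1s : B1^2 = x1^2+y1^2 := Real.sq_sqrt (by positivity)
  have hB2s : B2^2 = x2^2+y2^2 := Real.sq_sqrt (by positivity)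
  have hC : x1*x2+y1*y2 ≤ B1*B2 := by
    rcases le_or_gt (x1*x2+y1*y2) 0 with h | h
    · exact h.trans (by positivity)
    · apply le_of_sq_le' _ _ h.le (by positivity)
      have : (B1*B2)^2 = (x1^2+y1^2)*(x2^2+y2^2) := by
        rw [mul_pow, hB1s, hB2s]
      rw [this]; nlinarith only [sq_nonneg (x1*y2-x2*y1)]
  have h2 : (x1+x2)^2+(y1+y2)^2 ≤ (B1+B2)^2 := by nlinarith only [hC, hB1s, hB2s]
  calc Real.sqrt ((x1+x2)^2+(y1+y2)^2) ≤ Real.sqrt ((B1+B2)^2) := Real.sqrt_le_sqrt h2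
  _ = B1+B2 := Real.sqrt_sq (by positivity)

lemma sqrt_scale (k x y : ℝ) (hk : 0 ≤ k) :
    Real.sqrt ((k*x)^2 + (k*y)^2) = k * Real.sqrt (x^2+y^2) := by
  rw [show (k*x)^2+(k*y)^2 = k^2*(x^2+y^2) from by ring, Real.sqrt_mul (sq_nonneg k),
    Real.sqrt_sq hk]

lemma sqrt_comb (l x1 y1 x2 y2 : ℝ) (h0 : 0 ≤ l) (h1 : l ≤ 1) :
    Real.sqrt (((1-l)*x1 + l*x2)^2 + ((1-l)*y1 + l*y2)^2) ≤
      (1-l)*Real.sqrt (x1^2+y1^2) + l*Real.sqrt (x2^2+y2^2) := by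
  have := mink ((1-l)*x1) ((1-l)*y1) (l*x2) (l*y2)
  rw [sqrt_scale (1-l) x1 y1 (by linarith), sqrt_scale l x2 y2 h0] at this
  exact this

noncomputable def FF (a b c d : ℝ) : ℝ :=
  Real.sqrt (a^2+b^2) + Real.sqrt ((a-1)^2+b^2) + Real.sqrt (c^2+d^2) +
    Real.sqrt ((c-1)^2+d^2) + Real.sqrt ((a-c)^2+(b-d)^2)

def Feas (a b c d : ℝ) : Prop :=
  a^2+b^2 ≤ 1 ∧ (a-1)^2+b^2 ≤ 1 ∧ c^2+d^2 ≤ 1 ∧ (c-1)^2+d^2 ≤ 1 ∧ (a-c)^2+(b-d)^2 ≤ 1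

lemma FF_comb (a0 b0 c0 d0 a1 b1 c1 d1 l : ℝ) (h0 : 0 ≤ l) (h1 : l ≤ 1) :
    FF ((1-l)*a0+l*a1) ((1-l)*b0+l*b1) ((1-l)*c0+l*c1) ((1-l)*d0+l*d1) ≤
      (1-l)*FF a0 b0 c0 d0 + l*FF a1 b1 c1 d1 := by
  unfold FF
  have t1 := sqrt_comb l a0 b0 a1 b1 h0 h1
  have t2 := sqrt_comb l (a0-1) b0 (a1-1) b1 h0 h1
  have t3 := sqrt_comb l c0 d0 c1 d1 h0 h1
  have t4 := sqrt_comb l (c0-1) d0 (c1-1) d1 h0 h1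
  have t5 := sqrt_comb l (a0-c0) (b0-d0) (a1-c1) (b1-d1) h0 h1
  rw [show ((1-l)*a0+l*a1-1)^2 = ((1-l)*(a0-1)+l*(a1-1))^2 from by ring]
  rw [show ((1-l)*c0+l*c1-1)^2 = ((1-l)*(c0-1)+l*(c1-1))^2 from by ring]
  rw [show ((1-l)*a0+l*a1-((1-l)*c0+l*c1))^2 = ((1-l)*(a0-c0)+l*(a1-c1))^2 from by ring]
  rw [show ((1-l)*b0+l*b1-((1-l)*d0+l*d1))^2 = ((1-l)*(b0-d0)+l*(b1-d1))^2 from by ring]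
  linarith [t1, t2, t3, t4, t5]

lemma FF_push (a b c d va vb vc vd t0 t1 t : ℝ) (h0 : t0 ≤ t) (h1 : t ≤ t1) :
    FF (a+t*va) (b+t*vb) (c+t*vc) (d+t*vd) ≤
      max (FF (a+t0*va) (b+t0*vb) (c+t0*vc) (d+t0*vd))
          (FF (a+t1*va) (b+t1*vb) (c+t1*vc) (d+t1*vd)) := by
  rcases eq_or_lt_of_le (h0.trans h1) with he | hlt
  · have : t = t0 := le_antisymm (he ▸ h1) h0
    rw [this]; exact le_max_left _ _
  · set l := (t-t0)/(t1-t0) with hl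
    have hl0 : 0 ≤ l := div_nonneg (by linarith) (by linarith)
    have hl1 : l ≤ 1 := by
      rw [hl, div_le_one (by linarith)]; linarith
    have hne : t1 - t0 ≠ 0 := by linarith
    have hlt'' : l*(t1-t0) = t - t0 := by
      rw [hl]; exact div_mul_cancel₀ (t-t0) hne
    have hlt' : (1-l)*t0 + l*t1 = t := by linear_combination hlt''
    have key := FF_comb (a+t0*va) (b+t0*vb) (c+t0*vc) (d+t0*vd)
      (a+t1*va) (b+t1*vb) (c+t1*vc) (d+t1*vd) l hl0 hl1
    rw [show (1-l)*(a+t0*va)+l*(a+t1*va) = a+t*va from by linear_combination va*hlt',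
        show (1-l)*(b+t0*vb)+l*(b+t1*vb) = b+t*vb from by linear_combination vb*hlt',
        show (1-l)*(c+t0*vc)+l*(c+t1*vc) = c+t*vc from by linear_combination vc*hlt',
        show (1-l)*(d+t0*vd)+l*(d+t1*vd) = d+t*vd from by linear_combination vd*hlt'] at key
    have m1 := le_max_left (FF (a+t0*va) (b+t0*vb) (c+t0*vc) (d+t0*vd))
      (FF (a+t1*va) (b+t1*vb) (c+t1*vc) (d+t1*vd))
    have m2 := le_max_right (FF (a+t0*va) (b+t0*vb) (c+t0*vc) (d+t0*vd))
      (FF (a+t1*va) (b+t1*vb) (c+t1*vc) (d+t1*vd))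
    set M := max (FF (a+t0*va) (b+t0*vb) (c+t0*vc) (d+t0*vd))
      (FF (a+t1*va) (b+t1*vb) (c+t1*vc) (d+t1*vd))
    nlinarith only [key, m1, m2, hl0, hl1,
      mul_le_mul_of_nonneg_left m1 (by linarith : (0:ℝ) ≤ 1-l),
      mul_le_mul_of_nonneg_left m2 hl0]

/-- pushing until a constraint activates -/
lemma sup_active {n : ℕ} (g : Fin n → ℝ → ℝ) (hg : ∀ i, Continuous (g i)) (tc M : ℝ)
    (hfeas : ∀ i, g i tc ≤ 1) (hM : ∀ t, tc ≤ t → (∀ i, g i t ≤ 1) → t ≤ M) :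
    ∃ ts, tc ≤ ts ∧ (∀ i, g i ts ≤ 1) ∧ ∃ i, g i ts = 1 := by
  set S : Set ℝ := {t | tc ≤ t ∧ ∀ i, g i t ≤ 1} with hS
  have hSeq : S = {t | tc ≤ t} ∩ ⋂ i, {t | g i t ≤ 1} := by
    ext t; simp [hS, Set.mem_iInter]
  have hSne : S.Nonempty := ⟨tc, le_refl _, hfeas⟩
  have hSbdd : BddAbove S := ⟨M, fun t ht => hM t ht.1 ht.2⟩
  have hSclosed : IsClosed S := by
    rw [hSeq]
    exact (isClosed_le continuous_const continuous_id).inter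
      (isClosed_iInter fun i => isClosed_le (hg i) continuous_const)
  have hts : sSup S ∈ S := hSclosed.csSup_mem hSne hSbdd
  refine ⟨sSup S, hts.1, hts.2, ?_⟩
  by_contra hno
  push_neg at hno
  have hlt : ∀ i, g i (sSup S) < 1 := fun i => lt_of_le_of_ne (hts.2 i) (hno i)
  have hopen : IsOpen (⋂ i, {t : ℝ | g i t < 1}) :=
    isOpen_iInter_of_finite fun i => isOpen_lt (hg i) continuous_const
  have hmem : sSup S ∈ ⋂ i, {t : ℝ | g i t < 1} := by
    simp only [Set.mem_iInter]; exact fun i => hlt i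
  obtain ⟨ε, hε, hball⟩ := Metric.isOpen_iff.mp hopen _ hmem
  have hin : sSup S + ε/2 ∈ S := by
    constructor
    · linarith [hts.1]
    · intro i
      have : sSup S + ε/2 ∈ Metric.ball (sSup S) ε := by
        rw [Metric.mem_ball, Real.dist_eq, show sSup S + ε/2 - sSup S = ε/2 from by ring,
          abs_of_pos (by linarith)]
        linarith
      have := hball this
      simp only [Set.mem_iInter] at this
      exact (this i).le
  have := le_csSup hSbdd hin
  linarith

lemma FF_swap (a b c d : ℝ) : FF a b c d = FF c d a b := by
  unfold FF
  rw [show (a-c)^2+(b-d)^2 = (c-a)^2+(d-b)^2 from by ring]; ring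

lemma Feas_swap {a b c d : ℝ} (h : Feas a b c d) : Feas c d a b := by
  obtain ⟨h1,h2,h3,h4,h5⟩ := h
  exact ⟨h3,h4,h1,h2, by rw [show (c-a)^2+(d-b)^2 = (a-c)^2+(b-d)^2 from by ring]; exact h5⟩

lemma FF_reflx (a b c d : ℝ) : FF (1-a) b (1-c) d = FF a b c d := by
  unfold FF
  rw [show (1-a)^2+b^2 = (a-1)^2+b^2 from by ring,
      show (1-a-1)^2+b^2 = a^2+b^2 from by ring,
      show (1-c)^2+d^2 = (c-1)^2+d^2 from by ring,
      show (1-c-1)^2+d^2 = c^2+d^2 from by ring,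
      show (1-a-(1-c))^2+(b-d)^2 = (a-c)^2+(b-d)^2 from by ring]
  ring

lemma Feas_reflx {a b c d : ℝ} (h : Feas a b c d) : Feas (1-a) b (1-c) d := by
  obtain ⟨h1,h2,h3,h4,h5⟩ := h
  refine ⟨?_,?_,?_,?_,?_⟩
  · rw [show (1-a)^2+b^2 = (a-1)^2+b^2 from by ring]; exact h2
  · rw [show (1-a-1)^2+b^2 = a^2+b^2 from by ring]; exact h1
  · rw [show (1-c)^2+d^2 = (c-1)^2+d^2 from by ring]; exact h4
  · rw [show (1-c-1)^2+d^2 = c^2+d^2 from by ring]; exact h3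
  · rw [show (1-a-(1-c))^2+(b-d)^2 = (a-c)^2+(b-d)^2 from by ring]; exact h5

/-- Leaf: p = 1 and r = 1 -/
lemma L_pr (a b c d : ℝ) (h : Feas a b c d) (hp : a^2+b^2 = 1) (hr : c^2+d^2 = 1) :
    FF a b c d ≤ 3 + 2*K := by
  obtain ⟨h1,h2,h3,h4,h5⟩ := h
  have ha2 : a ≤ 1 := by nlinarith only [hp, sq_nonneg b, sq_nonneg (a-1)]
  have ha1 : 1/2 ≤ a := by nlinarith only [hp, h2]
  have hc2 : c ≤ 1 := by nlinarith only [hr, sq_nonneg d, sq_nonneg (c-1)]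
  have hc1 : 1/2 ≤ c := by nlinarith only [hr, h4]
  have he2 : (a*c+b*d)^2 ≤ 1 := by nlinarith only [sq_nonneg (a*d-b*c), hp, hr]
  have he1 : a*c+b*d ≤ 1 := by nlinarith only [he2, sq_nonneg (a*c+b*d-1)]
  have hehalf : 1/2 ≤ a*c+b*d := by nlinarith only [h5, hp, hr]
  have eq2 : (a-1)^2+b^2 = 2-2*a := by linear_combination hp
  have eq4 : (c-1)^2+d^2 = 2-2*c := by linear_combination hr
  have eq5 : (a-c)^2+(b-d)^2 = 2-2*(a*c+b*d) := by linear_combination hp + hr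
  have hrel0 : a^2+c^2+(a*c+b*d)^2-2*a*c*(a*c+b*d) = 1 := by
    linear_combination (d^2)*hp + (1-a^2)*hr
  set x := Real.sqrt (2-2*a) with hx
  set y := Real.sqrt (2-2*c) with hy
  set z := Real.sqrt (2-2*(a*c+b*d)) with hz
  have hx0 : 0 ≤ x := Real.sqrt_nonneg _
  have hy0 : 0 ≤ y := Real.sqrt_nonneg _
  have hz0 : 0 ≤ z := Real.sqrt_nonneg _
  have hx2 : x^2 = 2-2*a := Real.sq_sqrt (by linarith)
  have hy2 : y^2 = 2-2*c := Real.sq_sqrt (by linarith)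
  have hz2 : z^2 = 2-2*(a*c+b*d) := Real.sq_sqrt (by linarith)
  have hx1 : x ≤ 1 := le_of_sq_le' _ _ hx0 (by norm_num) (by rw [hx2]; nlinarith only [ha1])
  have hy1 : y ≤ 1 := le_of_sq_le' _ _ hy0 (by norm_num) (by rw [hy2]; nlinarith only [hc1])
  have hz1 : z ≤ 1 := le_of_sq_le' _ _ hz0 (by norm_num) (by rw [hz2]; nlinarith only [hehalf])
  have hrel : x^4+y^4+z^4 - 2*x^2*y^2 - 2*y^2*z^2 - 2*z^2*x^2 + x^2*y^2*z^2 = 0 := by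
    linear_combination 4*hrel0 - 2*(a+(1-x^2/2)-2*c*(a*c+b*d))*hx2
      - 2*(c+(1-y^2/2)-2*(1-x^2/2)*(a*c+b*d))*hy2
      - 2*((a*c+b*d)+(1-z^2/2)-2*(1-x^2/2)*(1-y^2/2))*hz2
  have := lemI x y z hx0 hy0 hz0 hx1 hy1 hz1 hrel
  unfold FF
  rw [hp, eq2, hr, eq4, eq5, Real.sqrt_one]
  linarith

/-- Leaf: p = 1 and m = 1 -/
lemma L_pm (a b c d : ℝ) (h : Feas a b c d) (hp : a^2+b^2 = 1)
    (hm : (a-c)^2+(b-d)^2 = 1) : FF a b c d ≤ 3 + 2*K := by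
  obtain ⟨h1,h2,h3,h4,h5⟩ := h
  have ha2 : a ≤ 1 := by nlinarith only [hp, sq_nonneg b, sq_nonneg (a-1)]
  have ha1 : 1/2 ≤ a := by nlinarith only [hp, h2]
  have eq2 : (a-1)^2+b^2 = 2-2*a := by linear_combination hp
  have eqr : c^2+d^2 = 2+2*(a*(c-a)+b*(d-b)) := by linear_combination hp + hm
  have eqs : (c-1)^2+d^2 = 3-2*a+2*(a*(c-a)+b*(d-b))-2*(c-a) := by
    linear_combination hp + hm
  have hrel : a^2+(a*(c-a)+b*(d-b))^2+(c-a)^2-2*a*(a*(c-a)+b*(d-b))*(c-a) = 1 := by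
    linear_combination ((d-b)^2)*hp + (1-a^2)*hm
  have hg2 : a*(c-a)+b*(d-b) ≤ -1/2 := by nlinarith only [h3, eqr]
  have hgsq : (a*(c-a)+b*(d-b))^2 ≤ 1 := by
    nlinarith only [sq_nonneg (a*(d-b)-b*(c-a)), hp, hm]
  have hg1 : -1 ≤ a*(c-a)+b*(d-b) := by
    nlinarith only [hgsq, sq_nonneg (a*(c-a)+b*(d-b)+1)]
  have hs0 : 0 ≤ 3-2*a+2*(a*(c-a)+b*(d-b))-2*(c-a) := by rw [← eqs]; positivity
  have hs1 : 3-2*a+2*(a*(c-a)+b*(d-b))-2*(c-a) ≤ 1 := by rw [← eqs]; exact h4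
  have key := lemH a (a*(c-a)+b*(d-b)) (c-a) ha1 ha2 hg1 hg2 hrel hs0 hs1
  unfold FF
  rw [hp, eq2, eqr, eqs, hm, Real.sqrt_one]
  linarith

/-- Leaf: p = 1 and s = 1 -/
lemma L_ps (a b c d : ℝ) (h : Feas a b c d) (hp : a^2+b^2 = 1)
    (hs : (c-1)^2+d^2 = 1) : FF a b c d ≤ 3 + 2*K := by
  obtain ⟨h1,h2,h3,h4,h5⟩ := h
  have ha2 : a ≤ 1 := by nlinarith only [hp, sq_nonneg b, sq_nonneg (a-1)]
  have ha1 : 1/2 ≤ a := by nlinarith only [hp, h2]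
  have eq2 : (a-1)^2+b^2 = 2-2*a := by linear_combination hp
  have eqr : c^2+d^2 = 2+2*(c-1) := by linear_combination hs
  have eqm : (a-c)^2+(b-d)^2 = 3-2*a+2*(c-1)-2*(a*(c-1)+b*d) := by
    linear_combination hp + hs
  have hrel : a^2+(c-1)^2+(a*(c-1)+b*d)^2-2*a*(c-1)*(a*(c-1)+b*d) = 1 := by
    linear_combination (d^2)*hp + (1-a^2)*hs
  have hg2 : c-1 ≤ -1/2 := by nlinarith only [h3, eqr]
  have hg1 : -1 ≤ c-1 := by nlinarith only [eqr, sq_nonneg c, sq_nonneg d]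
  have hs0 : 0 ≤ 3-2*a+2*(c-1)-2*(a*(c-1)+b*d) := by rw [← eqm]; positivity
  have hs1' : 3-2*a+2*(c-1)-2*(a*(c-1)+b*d) ≤ 1 := by rw [← eqm]; exact h5
  have key := lemH a (c-1) (a*(c-1)+b*d) ha1 ha2 hg1 hg2 ?_ hs0 hs1'
  · unfold FF
    rw [hp, eq2, eqr, eqm, hs, Real.sqrt_one]
    linarith
  · linear_combination (d^2)*hp + (1-a^2)*hs

lemma FF_diag (a b : ℝ) (h1 : a^2+b^2 ≤ 1) (h2 : (a-1)^2+b^2 ≤ 1) : FF a b a b ≤ 4 := by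
  unfold FF
  rw [show (a-a)^2+(b-b)^2 = (0:ℝ) from by ring, Real.sqrt_zero]
  have s1 : Real.sqrt (a^2+b^2) ≤ 1 := Real.sqrt_le_one.mpr h1
  have s2 : Real.sqrt ((a-1)^2+b^2) ≤ 1 := Real.sqrt_le_one.mpr h2
  linarith

lemma four_le : (4:ℝ) ≤ 3 + 2*K := by linarith [one_le_2K]

/-- p = 1 case: push W away from Z -/
lemma L_p (a b c d : ℝ) (h : Feas a b c d) (hp : a^2+b^2 = 1) : FF a b c d ≤ 3 + 2*K := by
  obtain ⟨h1,h2,h3,h4,h5⟩ := h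
  by_cases hm0 : (a-c)^2+(b-d)^2 = 0
  · have hca : c = a := by nlinarith only [hm0, sq_nonneg (a-c), sq_nonneg (b-d)]
    have hdb : d = b := by nlinarith only [hm0, sq_nonneg (a-c), sq_nonneg (b-d)]
    rw [hca, hdb]
    linarith [FF_diag a b h1 h2, four_le]
  · have hm2pos : 0 < (a-c)^2+(b-d)^2 := lt_of_le_of_ne (by positivity) (Ne.symm hm0)
    set m := Real.sqrt ((a-c)^2+(b-d)^2) with hmdef
    have hmpos : 0 < m := Real.sqrt_pos.mpr hm2pos
    have hms : m^2 = (a-c)^2+(b-d)^2 := Real.sq_sqrt (by positivity)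
    set va := (c-a)/m with hva
    set vb := (d-b)/m with hvb
    have hmva : m*va = c-a := by rw [hva]; field_simp
    have hmvb : m*vb = d-b := by rw [hvb]; field_simp
    have hunit : va^2+vb^2 = 1 := by
      have e : (m*va)^2+(m*vb)^2 = m^2*(va^2+vb^2) := by ring
      rw [hmva, hmvb] at e
      have e2 : m^2*(va^2+vb^2) = m^2*1 := by rw [← e, hms]; ring
      have hm2 : m^2 ≠ 0 := by positivity
      exact mul_left_cancel₀ hm2 e2
    set g : Fin 3 → ℝ → ℝ :=
      ![fun t => (a+t*va)^2+(b+t*vb)^2,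
        fun t => (a+t*va-1)^2+(b+t*vb)^2,
        fun t => t^2] with hgdef
    have hgc : ∀ i, Continuous (g i) := by
      intro i; fin_cases i
      · show Continuous fun t => (a+t*va)^2+(b+t*vb)^2
        fun_prop
      · show Continuous fun t => (a+t*va-1)^2+(b+t*vb)^2
        fun_prop
      · show Continuous fun t : ℝ => t^2
        fun_prop
    have hac : a + m*va = c := by rw [hmva]; ring
    have hbd : b + m*vb = d := by rw [hmvb]; ring
    have hfeas : ∀ i, g i m ≤ 1 := by
      intro i; fin_cases i
      · show (a+m*va)^2+(b+m*vb)^2 ≤ 1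
        rw [hac, hbd]; exact h3
      · show (a+m*va-1)^2+(b+m*vb)^2 ≤ 1
        rw [hac, hbd]; exact h4
      · show m^2 ≤ 1
        rw [hms]; exact h5
    have hB : (a*va+b*vb)^2 ≤ 1 := by nlinarith only [sq_nonneg (a*vb-b*va), hp, hunit]
    have hB1 : -1 ≤ a*va+b*vb := by nlinarith only [hB, sq_nonneg (a*va+b*vb+1)]
    have hM : ∀ t, m ≤ t → (∀ i, g i t ≤ 1) → t ≤ 3 := by
      intro t ht hall
      have h0 : (a+t*va)^2+(b+t*vb)^2 ≤ 1 := hall 0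
      nlinarith only [h0, hp, hunit, hB1, ht, hmpos.le, sq_nonneg t]
    obtain ⟨ts, hts1, hts2, hts3⟩ := sup_active g hgc m 3 hfeas hM
    have hpush := FF_push a b a b 0 0 va vb 0 ts m hmpos.le hts1
    rw [show a+m*(0:ℝ) = a from by ring, show b+m*(0:ℝ) = b from by ring,
        hac, hbd,
        show a+(0:ℝ)*(0:ℝ) = a from by ring, show b+(0:ℝ)*(0:ℝ) = b from by ring,
        show a+(0:ℝ)*va = a from by ring, show b+(0:ℝ)*vb = b from by ring,
        show a+ts*(0:ℝ) = a from by ring, show b+ts*(0:ℝ) = b from by ring] at hpush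
    have hr' : (a+ts*va)^2+(b+ts*vb)^2 ≤ 1 := hts2 0
    have hs' : (a+ts*va-1)^2+(b+ts*vb)^2 ≤ 1 := hts2 1
    have hm' : ts^2 ≤ 1 := hts2 2
    have hmeq : (a-(a+ts*va))^2+(b-(b+ts*vb))^2 = ts^2 := by linear_combination (ts^2)*hunit
    have hfeas' : Feas a b (a+ts*va) (b+ts*vb) := ⟨h1, h2, hr', hs', by rw [hmeq]; exact hm'⟩
    have hend : FF a b (a+ts*va) (b+ts*vb) ≤ 3 + 2*K := by
      obtain ⟨i, hi⟩ := hts3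
      fin_cases i
      · have hi' : (a+ts*va)^2+(b+ts*vb)^2 = 1 := hi
        exact L_pr a b _ _ hfeas' hp hi'
      · have hi' : (a+ts*va-1)^2+(b+ts*vb)^2 = 1 := hi
        have hi'' : ((a+ts*va)-1)^2+(b+ts*vb)^2 = 1 := hi'
        exact L_ps a b _ _ hfeas' hp hi''
      · have hi' : ts^2 = 1 := hi
        exact L_pm a b _ _ hfeas' hp (by rw [hmeq]; exact hi')
    have h40 : FF a b a b ≤ 4 := FF_diag a b h1 h2
    exact hpush.trans (max_le (by linarith [four_le]) hend)

lemma L_m_active (a b c d : ℝ) (h : Feas a b c d) (hm : (a-c)^2+(b-d)^2 = 1)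
    (hact : a^2+b^2 = 1 ∨ (a-1)^2+b^2 = 1 ∨ c^2+d^2 = 1 ∨ (c-1)^2+d^2 = 1) :
    FF a b c d ≤ 3+2*K := by
  rcases hact with hj | hj | hj | hj
  · exact L_pm a b c d h hj hm
  · rw [← FF_reflx a b c d]
    exact L_pm (1-a) b (1-c) d (Feas_reflx h)
      (by rw [show (1-a)^2+b^2 = (a-1)^2+b^2 from by ring]; exact hj)
      (by rw [show (1-a-(1-c))^2+(b-d)^2 = (a-c)^2+(b-d)^2 from by ring]; exact hm)
  · rw [FF_swap a b c d]
    exact L_pm c d a b (Feas_swap h) hj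
      (by rw [show (c-a)^2+(d-b)^2 = (a-c)^2+(b-d)^2 from by ring]; exact hm)
  · rw [FF_swap a b c d, ← FF_reflx c d a b]
    exact L_pm (1-c) d (1-a) b (Feas_reflx (Feas_swap h))
      (by rw [show (1-c)^2+d^2 = (c-1)^2+d^2 from by ring]; exact hj)
      (by rw [show (1-c-(1-a))^2+(d-b)^2 = (a-c)^2+(b-d)^2 from by ring]; exact hm)

/-- m = 1 case: translate the pair -/
lemma main_m (a b c d : ℝ) (h : Feas a b c d) (hm : (a-c)^2+(b-d)^2 = 1) :
    FF a b c d ≤ 3+2*K := by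
  obtain ⟨h1,h2,h3,h4,h5⟩ := h
  set gp : Fin 4 → ℝ → ℝ :=
    ![fun t => (a+t)^2+b^2, fun t => (a+t-1)^2+b^2,
      fun t => (c+t)^2+d^2, fun t => (c+t-1)^2+d^2] with hgp
  have hgpc : ∀ i, Continuous (gp i) := by
    intro i; fin_cases i
    · show Continuous fun t => (a+t)^2+b^2; fun_prop
    · show Continuous fun t => (a+t-1)^2+b^2; fun_prop
    · show Continuous fun t => (c+t)^2+d^2; fun_prop
    · show Continuous fun t => (c+t-1)^2+d^2; fun_prop
  have hfp : ∀ i, gp i 0 ≤ 1 := by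
    intro i; fin_cases i
    · show (a+0)^2+b^2 ≤ 1; rw [add_zero]; exact h1
    · show (a+0-1)^2+b^2 ≤ 1; rw [add_zero]; exact h2
    · show (c+0)^2+d^2 ≤ 1; rw [add_zero]; exact h3
    · show (c+0-1)^2+d^2 ≤ 1; rw [add_zero]; exact h4
  have hMp : ∀ t, 0 ≤ t → (∀ i, gp i t ≤ 1) → t ≤ 1-a := by
    intro t ht hall
    have h0 : (a+t)^2+b^2 ≤ 1 := hall 0
    nlinarith only [h0, sq_nonneg b, sq_nonneg (a+t-1)]
  obtain ⟨tp, htp0, htp2, htp3⟩ := sup_active gp hgpc 0 (1-a) hfp hMp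
  set gm : Fin 4 → ℝ → ℝ :=
    ![fun t => (a-t)^2+b^2, fun t => (a-t-1)^2+b^2,
      fun t => (c-t)^2+d^2, fun t => (c-t-1)^2+d^2] with hgm
  have hgmc : ∀ i, Continuous (gm i) := by
    intro i; fin_cases i
    · show Continuous fun t => (a-t)^2+b^2; fun_prop
    · show Continuous fun t => (a-t-1)^2+b^2; fun_prop
    · show Continuous fun t => (c-t)^2+d^2; fun_prop
    · show Continuous fun t => (c-t-1)^2+d^2; fun_prop
  have hfm : ∀ i, gm i 0 ≤ 1 := by
    intro i; fin_cases i
    · show (a-0)^2+b^2 ≤ 1; rw [sub_zero]; exact h1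
    · show (a-0-1)^2+b^2 ≤ 1; rw [sub_zero]; exact h2
    · show (c-0)^2+d^2 ≤ 1; rw [sub_zero]; exact h3
    · show (c-0-1)^2+d^2 ≤ 1; rw [sub_zero]; exact h4
  have hMm : ∀ t, 0 ≤ t → (∀ i, gm i t ≤ 1) → t ≤ 1+a := by
    intro t ht hall
    have h0 : (a-t)^2+b^2 ≤ 1 := hall 0
    nlinarith only [h0, sq_nonneg b, sq_nonneg (a-t+1)]
  obtain ⟨tm, htm0, htm2, htm3⟩ := sup_active gm hgmc 0 (1+a) hfm hMm
  have hpush := FF_push a b c d 1 0 1 0 (-tm) tp 0 (by linarith) htp0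
  rw [show a+(0:ℝ)*1 = a from by ring, show b+(0:ℝ)*0 = b from by ring,
      show c+(0:ℝ)*1 = c from by ring, show d+(0:ℝ)*0 = d from by ring,
      show a+(-tm)*1 = a-tm from by ring, show b+(-tm)*0 = b from by ring,
      show c+(-tm)*1 = c-tm from by ring, show d+(-tm)*0 = d from by ring,
      show a+tp*1 = a+tp from by ring, show b+tp*0 = b from by ring,
      show c+tp*1 = c+tp from by ring, show d+tp*0 = d from by ring] at hpush
  have hendp : FF (a+tp) b (c+tp) d ≤ 3+2*K := by
    have e1 : (a+tp)^2+b^2 ≤ 1 := htp2 0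
    have e2 : (a+tp-1)^2+b^2 ≤ 1 := htp2 1
    have e3 : (c+tp)^2+d^2 ≤ 1 := htp2 2
    have e4 : (c+tp-1)^2+d^2 ≤ 1 := htp2 3
    have hm' : ((a+tp)-(c+tp))^2+(b-d)^2 = 1 := by
      rw [show (a+tp)-(c+tp) = a-c from by ring]; exact hm
    have hfeas' : Feas (a+tp) b (c+tp) d :=
      ⟨e1, e2, e3, e4, le_of_eq hm'⟩
    apply L_m_active _ _ _ _ hfeas' hm'
    obtain ⟨j, hj⟩ := htp3
    fin_cases j
    · exact Or.inl hj
    · exact Or.inr (Or.inl hj)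
    · exact Or.inr (Or.inr (Or.inl hj))
    · exact Or.inr (Or.inr (Or.inr hj))
  have hendm : FF (a-tm) b (c-tm) d ≤ 3+2*K := by
    have e1 : (a-tm)^2+b^2 ≤ 1 := htm2 0
    have e2 : (a-tm-1)^2+b^2 ≤ 1 := htm2 1
    have e3 : (c-tm)^2+d^2 ≤ 1 := htm2 2
    have e4 : (c-tm-1)^2+d^2 ≤ 1 := htm2 3
    have hm' : ((a-tm)-(c-tm))^2+(b-d)^2 = 1 := by
      rw [show (a-tm)-(c-tm) = a-c from by ring]; exact hm
    have hfeas' : Feas (a-tm) b (c-tm) d :=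
      ⟨e1, e2, e3, e4, le_of_eq hm'⟩
    apply L_m_active _ _ _ _ hfeas' hm'
    obtain ⟨j, hj⟩ := htm3
    fin_cases j
    · exact Or.inl hj
    · exact Or.inr (Or.inl hj)
    · exact Or.inr (Or.inr (Or.inl hj))
    · exact Or.inr (Or.inr (Or.inr hj))
  exact hpush.trans (max_le hendm hendp)

/-- The main scalar inequality -/
lemma FF_le (a b c d : ℝ) (h : Feas a b c d) : FF a b c d ≤ 3+2*K := by
  obtain ⟨h1,h2,h3,h4,h5⟩ := h
  by_cases hm0 : (a-c)^2+(b-d)^2 = 0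
  · have hca : a = c := by nlinarith only [hm0, sq_nonneg (a-c), sq_nonneg (b-d)]
    have hdb : b = d := by nlinarith only [hm0, sq_nonneg (a-c), sq_nonneg (b-d)]
    rw [hca, hdb]
    linarith [FF_diag c d h3 h4, four_le]
  · have hm2pos : 0 < (a-c)^2+(b-d)^2 := lt_of_le_of_ne (by positivity) (Ne.symm hm0)
    set m := Real.sqrt ((a-c)^2+(b-d)^2) with hmdef
    have hmpos : 0 < m := Real.sqrt_pos.mpr hm2pos
    have hms : m^2 = (a-c)^2+(b-d)^2 := Real.sq_sqrt (by positivity)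
    set ua := (a-c)/m with hua
    set ub := (b-d)/m with hub
    have hmua : m*ua = a-c := by rw [hua]; field_simp
    have hmub : m*ub = b-d := by rw [hub]; field_simp
    have hunit : ua^2+ub^2 = 1 := by
      have e : (m*ua)^2+(m*ub)^2 = m^2*(ua^2+ub^2) := by ring
      rw [hmua, hmub] at e
      have e2 : m^2*(ua^2+ub^2) = m^2*1 := by rw [← e, hms]; ring
      have hm2 : m^2 ≠ 0 := by positivity
      exact mul_left_cancel₀ hm2 e2
    set g : Fin 3 → ℝ → ℝ :=
      ![fun t => (c+t*ua)^2+(d+t*ub)^2,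
        fun t => (c+t*ua-1)^2+(d+t*ub)^2,
        fun t => t^2] with hgdef
    have hgc : ∀ i, Continuous (g i) := by
      intro i; fin_cases i
      · show Continuous fun t => (c+t*ua)^2+(d+t*ub)^2; fun_prop
      · show Continuous fun t => (c+t*ua-1)^2+(d+t*ub)^2; fun_prop
      · show Continuous fun t : ℝ => t^2; fun_prop
    have hca : c + m*ua = a := by rw [hmua]; ring
    have hdb : d + m*ub = b := by rw [hmub]; ring
    have hfeas : ∀ i, g i m ≤ 1 := by
      intro i; fin_cases i
      · show (c+m*ua)^2+(d+m*ub)^2 ≤ 1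
        rw [hca, hdb]; exact h1
      · show (c+m*ua-1)^2+(d+m*ub)^2 ≤ 1
        rw [hca, hdb]; exact h2
      · show m^2 ≤ 1
        rw [hms]; exact h5
    have hB : (c*ua+d*ub)^2 ≤ 1 := by
      nlinarith only [sq_nonneg (c*ub-d*ua), h3, hunit, sq_nonneg (c*ua+d*ub)]
    have hB1 : -1 ≤ c*ua+d*ub := by nlinarith only [hB, sq_nonneg (c*ua+d*ub+1)]
    have hM : ∀ t, m ≤ t → (∀ i, g i t ≤ 1) → t ≤ 3 := by
      intro t ht hall
      have h0 : (c+t*ua)^2+(d+t*ub)^2 ≤ 1 := hall 0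
      nlinarith only [h0, hunit, hB1, ht, hmpos.le, sq_nonneg t, sq_nonneg (t+1),
        sq_nonneg c, sq_nonneg d, sq_nonneg (c+d), sq_nonneg (c-d)]
    obtain ⟨ts, hts1, hts2, hts3⟩ := sup_active g hgc m 3 hfeas hM
    have hpush := FF_push c d c d ua ub 0 0 0 ts m hmpos.le hts1
    rw [show c+m*(0:ℝ) = c from by ring, show d+m*(0:ℝ) = d from by ring,
        hca, hdb,
        show c+(0:ℝ)*(0:ℝ) = c from by ring, show d+(0:ℝ)*(0:ℝ) = d from by ring,
        show c+(0:ℝ)*ua = c from by ring, show d+(0:ℝ)*ub = d from by ring,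
        show c+ts*(0:ℝ) = c from by ring, show d+ts*(0:ℝ) = d from by ring] at hpush
    have hp' : (c+ts*ua)^2+(d+ts*ub)^2 ≤ 1 := hts2 0
    have hq' : (c+ts*ua-1)^2+(d+ts*ub)^2 ≤ 1 := hts2 1
    have hm' : ts^2 ≤ 1 := hts2 2
    have hmeq : ((c+ts*ua)-c)^2+((d+ts*ub)-d)^2 = ts^2 := by linear_combination (ts^2)*hunit
    have hfeas' : Feas (c+ts*ua) (d+ts*ub) c d :=
      ⟨hp', hq', h3, h4, by rw [hmeq]; exact hm'⟩
    have hend : FF (c+ts*ua) (d+ts*ub) c d ≤ 3 + 2*K := by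
      obtain ⟨i, hi⟩ := hts3
      fin_cases i
      · have hi' : (c+ts*ua)^2+(d+ts*ub)^2 = 1 := hi
        exact L_p _ _ _ _ hfeas' hi'
      · have hi' : (c+ts*ua-1)^2+(d+ts*ub)^2 = 1 := hi
        rw [← FF_reflx (c+ts*ua) (d+ts*ub) c d]
        refine L_p _ _ _ _ (Feas_reflx hfeas') ?_
        rw [show (1-(c+ts*ua))^2+(d+ts*ub)^2 = (c+ts*ua-1)^2+(d+ts*ub)^2 from by ring]
        exact hi'
      · have hi' : ts^2 = 1 := hi
        exact main_m _ _ _ _ hfeas' (by rw [hmeq]; exact hi')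
    have h40 : FF c d c d ≤ 4 := FF_diag c d h3 h4
    exact hpush.trans (max_le (by linarith [four_le]) hend)

lemma dist_formula (P Q : EuclideanSpace ℝ (Fin 2)) :
    dist P Q = Real.sqrt ((P 0 - Q 0)^2 + (P 1 - Q 1)^2) := by
  rw [EuclideanSpace.dist_eq, Fin.sum_univ_two]
  simp [Real.dist_eq, sq_abs]

lemma euclid_bound (X Y Z W : EuclideanSpace ℝ (Fin 2)) (D : ℝ) (hD : 0 < D)
    (hXY : dist X Y = D) (h2 : dist X Z ≤ D) (h3 : dist X W ≤ D)
    (h4 : dist Y Z ≤ D) (h5 : dist Y W ≤ D) (h6 : dist Z W ≤ D) :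
    dist X Y + dist X Z + dist X W + dist Y Z + dist Y W + dist Z W ≤ (4+2*K)*D := by
  have hDne : D ≠ 0 := ne_of_gt hD
  set dx := (Y 0 - X 0)/D with hdxdef
  set dy := (Y 1 - X 1)/D with hdydef
  have hYX0 : Y 0 - X 0 = D*dx := by rw [hdxdef]; field_simp
  have hYX1 : Y 1 - X 1 = D*dy := by rw [hdydef]; field_simp
  have hs : Real.sqrt ((X 0 - Y 0)^2+(X 1 - Y 1)^2) = D := by rw [← dist_formula]; exact hXY
  have hXYsq : (X 0 - Y 0)^2 + (X 1 - Y 1)^2 = D^2 := by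
    rw [← hs, Real.sq_sqrt (by positivity)]
  have hdxy : dx^2+dy^2 = 1 := by
    rw [hdxdef, hdydef]; field_simp; linear_combination hXYsq
  set a := ((Z 0 - X 0)*dx + (Z 1 - X 1)*dy)/D with hadef
  set b := (-(Z 0 - X 0)*dy + (Z 1 - X 1)*dx)/D with hbdef
  set c := ((W 0 - X 0)*dx + (W 1 - X 1)*dy)/D with hcdef
  set d := (-(W 0 - X 0)*dy + (W 1 - X 1)*dx)/D with hddef
  have hDa : D*a = (Z 0 - X 0)*dx + (Z 1 - X 1)*dy := by rw [hadef]; field_simp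
  have hDb : D*b = -(Z 0 - X 0)*dy + (Z 1 - X 1)*dx := by rw [hbdef]; field_simp
  have hDc : D*c = (W 0 - X 0)*dx + (W 1 - X 1)*dy := by rw [hcdef]; field_simp
  have hDd : D*d = -(W 0 - X 0)*dy + (W 1 - X 1)*dx := by rw [hddef]; field_simp
  have e1 : (X 0 - Z 0)^2 + (X 1 - Z 1)^2 = D^2*(a^2+b^2) := by
    rw [show D^2*(a^2+b^2) = (D*a)^2+(D*b)^2 from by ring, hDa, hDb]
    linear_combination (-((Z 0 - X 0)^2+(Z 1 - X 1)^2))*hdxy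
  have e2 : (Y 0 - Z 0)^2 + (Y 1 - Z 1)^2 = D^2*((a-1)^2+b^2) := by
    rw [show Y 0 - Z 0 = D*dx - (Z 0 - X 0) from by linarith,
        show Y 1 - Z 1 = D*dy - (Z 1 - X 1) from by linarith,
        show D^2*((a-1)^2+b^2) = (D*a-D)^2+(D*b)^2 from by ring, hDa, hDb]
    linear_combination (D^2-(Z 0 - X 0)^2-(Z 1 - X 1)^2)*hdxy
  have e3 : (X 0 - W 0)^2 + (X 1 - W 1)^2 = D^2*(c^2+d^2) := by
    rw [show D^2*(c^2+d^2) = (D*c)^2+(D*d)^2 from by ring, hDc, hDd]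
    linear_combination (-((W 0 - X 0)^2+(W 1 - X 1)^2))*hdxy
  have e4 : (Y 0 - W 0)^2 + (Y 1 - W 1)^2 = D^2*((c-1)^2+d^2) := by
    rw [show Y 0 - W 0 = D*dx - (W 0 - X 0) from by linarith,
        show Y 1 - W 1 = D*dy - (W 1 - X 1) from by linarith,
        show D^2*((c-1)^2+d^2) = (D*c-D)^2+(D*d)^2 from by ring, hDc, hDd]
    linear_combination (D^2-(W 0 - X 0)^2-(W 1 - X 1)^2)*hdxy
  have e5 : (Z 0 - W 0)^2 + (Z 1 - W 1)^2 = D^2*((a-c)^2+(b-d)^2) := by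
    rw [show D^2*((a-c)^2+(b-d)^2) = (D*a-D*c)^2+(D*b-D*d)^2 from by ring, hDa, hDb, hDc, hDd]
    linear_combination (-((Z 0 - W 0)^2+(Z 1 - W 1)^2))*hdxy
  have sqrtD : ∀ s : ℝ, Real.sqrt (D^2*s) = D*Real.sqrt s := by
    intro s
    rw [Real.sqrt_mul (sq_nonneg D), Real.sqrt_sq hD.le]
  have dXZ : dist X Z = D*Real.sqrt (a^2+b^2) := by rw [dist_formula, e1, sqrtD]
  have dYZ : dist Y Z = D*Real.sqrt ((a-1)^2+b^2) := by rw [dist_formula, e2, sqrtD]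
  have dXW : dist X W = D*Real.sqrt (c^2+d^2) := by rw [dist_formula, e3, sqrtD]
  have dYW : dist Y W = D*Real.sqrt ((c-1)^2+d^2) := by rw [dist_formula, e4, sqrtD]
  have dZW : dist Z W = D*Real.sqrt ((a-c)^2+(b-d)^2) := by rw [dist_formula, e5, sqrtD]
  have fb : ∀ s : ℝ, D*Real.sqrt s ≤ D → s ≤ 1 := by
    intro s hle
    have h1 : Real.sqrt s ≤ 1 := by
      by_contra hc; push_neg at hc
      nlinarith only [hle, hD, hc]
    exact Real.sqrt_le_one.mp h1
  have hfeas : Feas a b c d := by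
    refine ⟨fb _ (by rw [← dXZ]; exact h2), fb _ (by rw [← dYZ]; exact h4),
      fb _ (by rw [← dXW]; exact h3), fb _ (by rw [← dYW]; exact h5),
      fb _ (by rw [← dZW]; exact h6)⟩
  have hFF := FF_le a b c d hfeas
  have hFF' := mul_le_mul_of_nonneg_left hFF hD.le
  rw [hXY, dXZ, dYZ, dXW, dYW, dZW]
  unfold FF at hFF'
  nlinarith only [hFF', hD.le]

lemma sum_expand (A : Fin 4 → EuclideanSpace ℝ (Fin 2)) :
    (∑ p ∈ Finset.univ.filter (fun p : Fin 4 × Fin 4 => p.1 < p.2), dist (A p.1) (A p.2)) =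
    dist (A 0) (A 1) + dist (A 0) (A 2) + dist (A 0) (A 3) + dist (A 1) (A 2) +
    dist (A 1) (A 3) + dist (A 2) (A 3) := by
  rw [show (Finset.univ.filter (fun p : Fin 4 × Fin 4 => p.1 < p.2)) =
    ({(0,1),(0,2),(0,3),(1,2),(1,3),(2,3)} : Finset (Fin 4 × Fin 4)) from by decide]
  rw [Finset.sum_insert (by decide), Finset.sum_insert (by decide), Finset.sum_insert (by decide),
      Finset.sum_insert (by decide), Finset.sum_insert (by decide), Finset.sum_singleton]
  dsimp only
  ring

noncomputable def pt (x y : ℝ) : EuclideanSpace ℝ (Fin 2) :=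
  (WithLp.equiv 2 (Fin 2 → ℝ)).symm ![x, y]

noncomputable def P0 : EuclideanSpace ℝ (Fin 2) := pt 0 0
noncomputable def P1 : EuclideanSpace ℝ (Fin 2) := pt 1 0
noncomputable def P2 : EuclideanSpace ℝ (Fin 2) := pt (1/2) (Real.sqrt 3/2)
noncomputable def P3 : EuclideanSpace ℝ (Fin 2) := pt (1/2) (Real.sqrt 3/2 - 1)

lemma dP01 : dist P0 P1 = 1 := by
  rw [dist_formula]
  rw [show ((P0 0 : ℝ) - P1 0)^2 + (P0 1 - P1 1)^2 = 1 from by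
    show ((0:ℝ)-1)^2 + ((0:ℝ)-0)^2 = 1; norm_num]
  exact Real.sqrt_one

lemma dP02 : dist P0 P2 = 1 := by
  rw [dist_formula]
  rw [show ((P0 0 : ℝ) - P2 0)^2 + (P0 1 - P2 1)^2 = 1 from by
    show ((0:ℝ)-1/2)^2 + ((0:ℝ)-Real.sqrt 3/2)^2 = 1
    linear_combination (1/4)*s3_sq]
  exact Real.sqrt_one

lemma dP03 : dist P0 P3 = K := by
  rw [dist_formula]
  rw [show ((P0 0 : ℝ) - P3 0)^2 + (P0 1 - P3 1)^2 = 2 - Real.sqrt 3 from by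
    show ((0:ℝ)-1/2)^2 + ((0:ℝ)-(Real.sqrt 3/2-1))^2 = 2 - Real.sqrt 3
    linear_combination (1/4)*s3_sq]
  rfl

lemma dP12 : dist P1 P2 = 1 := by
  rw [dist_formula]
  rw [show ((P1 0 : ℝ) - P2 0)^2 + (P1 1 - P2 1)^2 = 1 from by
    show ((1:ℝ)-1/2)^2 + ((0:ℝ)-Real.sqrt 3/2)^2 = 1
    linear_combination (1/4)*s3_sq]
  exact Real.sqrt_one

lemma dP13 : dist P1 P3 = K := by
  rw [dist_formula]
  rw [show ((P1 0 : ℝ) - P3 0)^2 + (P1 1 - P3 1)^2 = 2 - Real.sqrt 3 from by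
    show ((1:ℝ)-1/2)^2 + ((0:ℝ)-(Real.sqrt 3/2-1))^2 = 2 - Real.sqrt 3
    linear_combination (1/4)*s3_sq]
  rfl

lemma dP23 : dist P2 P3 = 1 := by
  rw [dist_formula]
  rw [show ((P2 0 : ℝ) - P3 0)^2 + (P2 1 - P3 1)^2 = 1 from by
    show ((1/2:ℝ)-1/2)^2 + (Real.sqrt 3/2-(Real.sqrt 3/2-1))^2 = 1
    norm_num]
  exact Real.sqrt_one

end Stmt7Aux

open Stmt7Aux in
theorem stmt7 :
    IsGreatest {r : ℝ | ∃ (A : Fin 4 → EuclideanSpace ℝ (Fin 2)) (D : ℝ),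
        IsGreatest {d : ℝ | ∃ i j : Fin 4, i < j ∧ d = dist (A i) (A j)} D ∧
        0 < D ∧
        r = (∑ p ∈ Finset.univ.filter (fun p : Fin 4 × Fin 4 => p.1 < p.2),
              dist (A p.1) (A p.2)) / D}
      (4 + 2 * Real.sqrt (2 - Real.sqrt 3)) := by
  have hKval : (4:ℝ) + 2*Real.sqrt (2 - Real.sqrt 3) = 4 + 2*K := rfl
  constructor
  · -- membership
    refine ⟨![P0, P1, P2, P3], 1, ⟨⟨0, 1, by decide, ?_⟩, ?_⟩, one_pos, ?_⟩
    · show (1:ℝ) = dist P0 P1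
      rw [dP01]
    · rintro e ⟨i, j, hij, rfl⟩
      fin_cases i <;> fin_cases j <;>
        first
          | exact absurd hij (by decide)
          | (show dist P0 P1 ≤ 1; rw [dP01])
          | (show dist P0 P2 ≤ 1; rw [dP02])
          | (show dist P0 P3 ≤ 1; rw [dP03]; exact K_le_one)
          | (show dist P1 P2 ≤ 1; rw [dP12])
          | (show dist P1 P3 ≤ 1; rw [dP13]; exact K_le_one)
          | (show dist P2 P3 ≤ 1; rw [dP23])
    · rw [sum_expand]
      show (4:ℝ) + 2*Real.sqrt (2 - Real.sqrt 3) =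
        (dist P0 P1 + dist P0 P2 + dist P0 P3 + dist P1 P2 + dist P1 P3 + dist P2 P3)/1
      rw [dP01, dP02, dP03, dP12, dP13, dP23, div_one, hKval]
      ring
  · -- upper bound
    rintro r ⟨A, D, ⟨⟨i0, j0, hij, hDeq⟩, hub⟩, hD0, hreq⟩
    have hd : ∀ i j : Fin 4, i < j → dist (A i) (A j) ≤ D := fun i j h => hub ⟨i, j, h, rfl⟩
    rw [hKval, hreq, div_le_iff₀ hD0, sum_expand]
    have c01 := dist_comm (A 0) (A 1)
    have c02 := dist_comm (A 0) (A 2)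
    have c03 := dist_comm (A 0) (A 3)
    have c12 := dist_comm (A 1) (A 2)
    have c13 := dist_comm (A 1) (A 3)
    have c23 := dist_comm (A 2) (A 3)
    fin_cases i0 <;> fin_cases j0 <;> first
      | exact absurd hij (by decide)
      | (exact le_of_le_of_eq (by
          linarith [euclid_bound (A 0) (A 1) (A 2) (A 3) D hD0 hDeq.symm
            (hd 0 2 (by decide)) (hd 0 3 (by decide)) (hd 1 2 (by decide))
            (hd 1 3 (by decide)) (hd 2 3 (by decide))]) rfl)
      | (exact le_of_le_of_eq (by
          linarith [euclid_bound (A 0) (A 2) (A 1) (A 3) D hD0 hDeq.symm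
            (hd 0 1 (by decide)) (hd 0 3 (by decide)) (by rw [← c12]; exact hd 1 2 (by decide))
            (hd 2 3 (by decide)) (hd 1 3 (by decide)), c12]) rfl)
      | (exact le_of_le_of_eq (by
          linarith [euclid_bound (A 0) (A 3) (A 1) (A 2) D hD0 hDeq.symm
            (hd 0 1 (by decide)) (hd 0 2 (by decide)) (by rw [← c13]; exact hd 1 3 (by decide))
            (by rw [← c23]; exact hd 2 3 (by decide)) (hd 1 2 (by decide)), c13, c23]) rfl)
      | (exact le_of_le_of_eq (by
          linarith [euclid_bound (A 1) (A 2) (A 0) (A 3) D hD0 hDeq.symm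
            (by rw [← c01]; exact hd 0 1 (by decide)) (hd 1 3 (by decide))
            (by rw [← c02]; exact hd 0 2 (by decide)) (hd 2 3 (by decide))
            (hd 0 3 (by decide)), c01, c02]) rfl)
      | (exact le_of_le_of_eq (by
          linarith [euclid_bound (A 1) (A 3) (A 0) (A 2) D hD0 hDeq.symm
            (by rw [← c01]; exact hd 0 1 (by decide)) (hd 1 2 (by decide))
            (by rw [← c03]; exact hd 0 3 (by decide)) (by rw [← c23]; exact hd 2 3 (by decide))
            (hd 0 2 (by decide)), c01, c03, c23]) rfl)
      | (exact le_of_le_of_eq (by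
          linarith [euclid_bound (A 2) (A 3) (A 0) (A 1) D hD0 hDeq.symm
            (by rw [← c02]; exact hd 0 2 (by decide)) (by rw [← c12]; exact hd 1 2 (by decide))
            (by rw [← c03]; exact hd 0 3 (by decide)) (by rw [← c13]; exact hd 1 3 (by decide))
            (hd 0 1 (by decide)), c02, c12, c03, c13]) rfl)
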